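/- For every integer p ≥ 0 and every feasible preemptive two-machine schedule P of the job set J_p (unit jobs with the stated in-tree precedences and release dates), the amount of job a_4^p executed during [2p+2, ∞) is at least 1 - 1/2^{p+1}. -/

import Mathlib

open MeasureTheory

/-- Jobs of the instance `J_p`: the job `(i, j)` is `a_{j+1}^i`, a unit job; in
particular `(i, 3)` is the job `a_4^i`. -/
abbrev JobP (p : ℕ) := Fin (p + 1) × Fin 4

/-- Release dates: `r(a_j^i) = 2i` for `j ∈ {1,2,3}` and `r(a_4^i) = 2i + 1`. -/
def relDate {p : ℕ} (a : JobP p) : ℝ :=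
  if a.2 = 3 then 2 * ((a.1 : ℕ) : ℝ) + 1 else 2 * ((a.1 : ℕ) : ℝ)

/-- Precedences: `a_j^i ≺ a_4^i` for `j ∈ {1,2,3}` and `a_4^i ≺ a_4^(i+1)`. -/
def Prec {p : ℕ} (a b : JobP p) : Prop :=
  (a.1 = b.1 ∧ a.2 ≠ 3 ∧ b.2 = 3) ∨ (a.2 = 3 ∧ b.2 = 3 ∧ (a.1 : ℕ) + 1 = (b.1 : ℕ))

/-- A feasible preemptive two-machine schedule of `J_p`: `S a` is the set of times
at which the unit job `a` executes; release dates are respected, each job executes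
for total time `1`, at most two jobs execute at any instant, and no job executes
before one of its predecessors has completed. -/
def FeasibleP {p : ℕ} (S : JobP p → Set ℝ) : Prop :=
  (∀ a, MeasurableSet (S a)) ∧
  (∀ a, S a ⊆ Set.Ici (relDate a)) ∧
  (∀ a, volume (S a) = 1) ∧
  (∀ t : ℝ, {a | t ∈ S a}.ncard ≤ 2) ∧
  (∀ a b, Prec a b → ∀ s ∈ S a, ∀ t ∈ S b, s ≤ t)

/-- Capacity: at any instant at most two jobs run, so the total work of a finite
set of jobs inside a measurable time set `I` is at most `2 * volume I`. -/
lemma capacity {p : ℕ} {S : JobP p → Set ℝ} (hS : FeasibleP S)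
    (F : Finset (JobP p)) {I : Set ℝ} (hI : MeasurableSet I) :
    ∑ a ∈ F, volume (S a ∩ I) ≤ 2 * volume I := by
  classical
  obtain ⟨hmeas, -, -, hcard, -⟩ := hS
  have h1 : ∀ a ∈ F, volume (S a ∩ I)
      = ∫⁻ t, (S a ∩ I).indicator (1 : ℝ → ENNReal) t := by
    intro a _
    rw [lintegral_indicator_one ((hmeas a).inter hI)]
  rw [Finset.sum_congr rfl h1,
    ← lintegral_finset_sum _ (fun a _ => (measurable_one.indicator ((hmeas a).inter hI)))]
  have hpt : ∀ t, ∑ a ∈ F, (S a ∩ I).indicator (1 : ℝ → ENNReal) t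
      ≤ I.indicator (fun _ => (2 : ENNReal)) t := by
    intro t
    by_cases ht : t ∈ I
    · rw [Set.indicator_of_mem ht]
      have he : ∀ a ∈ F, (S a ∩ I).indicator (1 : ℝ → ENNReal) t
          = if t ∈ S a then 1 else 0 := by
        intro a _
        by_cases h : t ∈ S a
        · rw [Set.indicator_of_mem (Set.mem_inter h ht), if_pos h]; rfl
        · rw [Set.indicator_of_notMem (fun hc => h hc.1), if_neg h]
      rw [Finset.sum_congr rfl he, Finset.sum_boole]
      have hsub : (↑(F.filter (fun a => t ∈ S a)) : Set (JobP p)) ⊆ {a | t ∈ S a} :=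
        fun a ha => (Finset.mem_filter.mp ha).2
      have h2 := Set.ncard_le_ncard hsub (Set.toFinite _)
      rw [Set.ncard_coe_finset] at h2
      exact_mod_cast h2.trans (hcard t)
    · rw [Set.indicator_of_notMem ht]
      refine le_of_eq (Finset.sum_eq_zero fun a _ => ?_)
      exact Set.indicator_of_notMem (fun hc => ht hc.2) _
  calc ∫⁻ t, ∑ a ∈ F, (S a ∩ I).indicator (1 : ℝ → ENNReal) t
      ≤ ∫⁻ t, I.indicator (fun _ => (2 : ENNReal)) t := lintegral_mono hpt
    _ = 2 * volume I := lintegral_indicator_const hI 2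

/-- If a job only runs after time `L`, its work before `U` is at most `U - L`. -/
lemma mbound {p : ℕ} (S : JobP p → Set ℝ) (b : JobP p) {L U : ℝ}
    (h : S b ⊆ Set.Ici L) :
    volume (S b ∩ Set.Iio U) ≤ ENNReal.ofReal (U - L) := by
  have hsub : S b ∩ Set.Iio U ⊆ Set.Ico L U := fun x hx => ⟨h hx.1, hx.2⟩
  calc volume (S b ∩ Set.Iio U) ≤ volume (Set.Ico L U) := measure_mono hsub
    _ = ENNReal.ofReal (U - L) := Real.volume_Ico

/-- Main induction: the work of `a_4^i` done before time `2i + 2` is at most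
`(1/2)^(i+1)`. -/
lemma key {p : ℕ} {S : JobP p → Set ℝ} (hS : FeasibleP S) :
    ∀ i : ℕ, ∀ hi : i < p + 1,
      volume (S (⟨i, hi⟩, 3) ∩ Set.Iio (2 * (i : ℝ) + 2))
        ≤ ENNReal.ofReal ((2 : ℝ)⁻¹ ^ (i + 1)) := by
  obtain ⟨hmeas, hrel, hvol, hcard, hprec⟩ := hS
  have e2 : (2 : ENNReal) = ENNReal.ofReal (2 : ℝ) := by norm_num
  intro i
  induction i with
  | zero =>
    intro hi
    -- every point of S (0,3) is ≥ 3/2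
    have hstart : S (⟨0, hi⟩, 3) ⊆ Set.Ici (3 / 2 : ℝ) := by
      intro t ht
      have hIcc : MeasurableSet (Set.Icc (0 : ℝ) t) := measurableSet_Icc
      have hsub : ∀ j : Fin 4, j ≠ 3 → S (⟨0, hi⟩, j) ⊆ Set.Icc (0 : ℝ) t := by
        intro j hj s hs
        refine ⟨?_, hprec (⟨0, hi⟩, j) (⟨0, hi⟩, 3) (Or.inl ⟨rfl, hj, rfl⟩) s hs t ht⟩
        have h0 := hrel (⟨0, hi⟩, j) hs
        simp only [relDate, if_neg hj, Set.mem_Ici] at h0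
        simpa using h0
      have hfull : ∀ j : Fin 4, j ≠ 3 →
          volume (S (⟨0, hi⟩, j) ∩ Set.Icc (0 : ℝ) t) = 1 := by
        intro j hj
        rw [Set.inter_eq_left.mpr (hsub j hj)]; exact hvol _
      have hcap := capacity ⟨hmeas, hrel, hvol, hcard, hprec⟩
        {(⟨0, hi⟩, 0), (⟨0, hi⟩, 1), (⟨0, hi⟩, 2)} hIcc
      rw [Finset.sum_insert (by simp [Prod.ext_iff]),
        Finset.sum_insert (by simp [Prod.ext_iff]),
        Finset.sum_singleton, hfull 0 (by decide), hfull 1 (by decide),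
        hfull 2 (by decide), Real.volume_Icc] at hcap
      have ht0 : (1 : ℝ) ≤ t := by
        have h0 : 2 * (((0 : ℕ) : ℕ) : ℝ) + 1 ≤ t := hrel (⟨0, hi⟩, 3) ht
        simpa using h0
      have hmain : ENNReal.ofReal 3 ≤ ENNReal.ofReal (2 * (t - 0)) := by
        calc ENNReal.ofReal 3 = 1 + (1 + 1) := by norm_num
          _ ≤ 2 * ENNReal.ofReal (t - 0) := hcap
          _ = ENNReal.ofReal (2 * (t - 0)) := by
              rw [e2, ← ENNReal.ofReal_mul (by norm_num)]
      have hreal := (ENNReal.ofReal_le_ofReal_iff (by linarith)).mp hmain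
      simp only [Set.mem_Ici]; linarith
    refine le_trans (mbound S (⟨0, hi⟩, 3) hstart (U := 2 * ((0 : ℕ) : ℝ) + 2)) ?_
    norm_num
  | succ i ih =>
    intro hi
    have hi' : i < p + 1 := Nat.lt_of_succ_lt hi
    set c : ℝ := (2 : ℝ)⁻¹ ^ (i + 1) with hc
    have hcpos : 0 < c := by positivity
    set r : ℝ := 2 * (i : ℝ) + 2 with hr
    have hstart : S (⟨i + 1, hi⟩, 3) ⊆ Set.Ici (r + 2 - c / 2) := by
      intro t ht
      have hIcc : MeasurableSet (Set.Icc r t) := measurableSet_Icc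
      have htr : r ≤ t := by
        have h0 : 2 * (((i + 1 : ℕ) : ℕ) : ℝ) + 1 ≤ t := hrel (⟨i + 1, hi⟩, 3) ht
        rw [hr]; push_cast at h0 ⊢; linarith
      -- the three short jobs of generation i+1 fit entirely in [r, t]
      have hsub : ∀ j : Fin 4, j ≠ 3 → S (⟨i + 1, hi⟩, j) ⊆ Set.Icc r t := by
        intro j hj s hs
        refine ⟨?_, hprec (⟨i + 1, hi⟩, j) (⟨i + 1, hi⟩, 3)
          (Or.inl ⟨rfl, hj, rfl⟩) s hs t ht⟩
        have h0 := hrel (⟨i + 1, hi⟩, j) hs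
        simp only [relDate, if_neg hj, Set.mem_Ici] at h0
        have h1 : 2 * (((i + 1 : ℕ) : ℕ) : ℝ) ≤ s := h0
        rw [hr]; push_cast at h1 ⊢; linarith
      have hfull : ∀ j : Fin 4, j ≠ 3 →
          volume (S (⟨i + 1, hi⟩, j) ∩ Set.Icc r t) = 1 := by
        intro j hj
        rw [Set.inter_eq_left.mpr (hsub j hj)]; exact hvol _
      -- the predecessor a_4^i: finishes before t, at most c of it is before r
      set pd : JobP p := (⟨i, hi'⟩, 3) with hpd
      have hpdt : S pd ⊆ Set.Iic t := fun s hs =>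
        hprec pd (⟨i + 1, hi⟩, 3) (Or.inr ⟨rfl, rfl, rfl⟩) s hs t ht
      have hsplit := measure_inter_add_diff (μ := volume) (S pd)
        (measurableSet_Ici (a := r))
      have hdiff : S pd \ Set.Ici r = S pd ∩ Set.Iio r := by
        rw [Set.diff_eq, Set.compl_Ici]
      rw [hdiff, hvol pd] at hsplit
      have hpred_le : volume (S pd ∩ Set.Iio r) ≤ ENNReal.ofReal c := ih hi'
      have hsub2 : S pd ∩ Set.Ici r ⊆ S pd ∩ Set.Icc r t :=
        fun x hx => ⟨hx.1, hx.2, hpdt hx.1⟩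
      have hge : 1 ≤ volume (S pd ∩ Set.Icc r t) + ENNReal.ofReal c := by
        calc (1 : ENNReal) = volume (S pd ∩ Set.Ici r) + volume (S pd ∩ Set.Iio r) :=
              hsplit.symm
          _ ≤ volume (S pd ∩ Set.Icc r t) + ENNReal.ofReal c :=
              add_le_add (measure_mono hsub2) hpred_le
      have hcap := capacity ⟨hmeas, hrel, hvol, hcard, hprec⟩
        {(⟨i + 1, hi⟩, 0), (⟨i + 1, hi⟩, 1), (⟨i + 1, hi⟩, 2), pd} hIcc
      have hne : (i : ℕ) ≠ i + 1 := by omega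
      rw [Finset.sum_insert (by simp [hpd, Prod.ext_iff, Fin.ext_iff]),
        Finset.sum_insert (by simp [hpd, Prod.ext_iff, Fin.ext_iff]),
        Finset.sum_insert (by simp [hpd, Prod.ext_iff, Fin.ext_iff]),
        Finset.sum_singleton, hfull 0 (by decide), hfull 1 (by decide),
        hfull 2 (by decide), Real.volume_Icc] at hcap
      have hmain : ENNReal.ofReal 4 ≤ ENNReal.ofReal (2 * (t - r) + c) := by
        calc ENNReal.ofReal 4 = 1 + (1 + (1 + 1)) := by norm_num
          _ ≤ 1 + (1 + (1 + (volume (S pd ∩ Set.Icc r t) + ENNReal.ofReal c))) := by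
              gcongr
          _ = 1 + (1 + (1 + volume (S pd ∩ Set.Icc r t))) + ENNReal.ofReal c := by
              ring
          _ ≤ 2 * ENNReal.ofReal (t - r) + ENNReal.ofReal c :=
              add_le_add_left hcap _
          _ = ENNReal.ofReal (2 * (t - r) + c) := by
              rw [e2, ← ENNReal.ofReal_mul (by norm_num),
                ← ENNReal.ofReal_add (by linarith) (le_of_lt hcpos)]
      have hreal := (ENNReal.ofReal_le_ofReal_iff (by linarith)).mp hmain
      simp only [Set.mem_Ici]; linarith
    have hb := mbound S (⟨i + 1, hi⟩, 3) hstart (U := 2 * ((i + 1 : ℕ) : ℝ) + 2)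
    have heq : 2 * ((i + 1 : ℕ) : ℝ) + 2 - (r + 2 - c / 2) = (2 : ℝ)⁻¹ ^ (i + 1 + 1) := by
      rw [hr, hc]; push_cast; ring
    rw [heq] at hb
    exact hb

/-- Claim 5.1: in any feasible preemptive two-machine schedule of `J_p`, the amount
of `a_4^p` executed during `[2p+2, ∞)` is at least `1 - 1/2^(p+1)`. -/
theorem a4p_late_work (p : ℕ) (S : JobP p → Set ℝ) (hS : FeasibleP S) :
    ENNReal.ofReal (1 - 1 / 2 ^ (p + 1)) ≤
      volume (S (Fin.last p, 3) ∩ Set.Ici (2 * (p : ℝ) + 2)) := by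
  have hmeasb := hS.1
  have hvol := hS.2.2.1
  have hkey := key hS p (Nat.lt_succ_self p)
  have hlast : (Fin.last p : Fin (p + 1)) = ⟨p, Nat.lt_succ_self p⟩ := rfl
  rw [hlast]
  set b : JobP p := (⟨p, Nat.lt_succ_self p⟩, 3) with hb
  set T : ℝ := 2 * (p : ℝ) + 2 with hT
  have hsplit := measure_inter_add_diff (μ := volume) (S b) (measurableSet_Ici (a := T))
  have hdiff : S b \ Set.Ici T = S b ∩ Set.Iio T := by
    rw [Set.diff_eq, Set.compl_Ici]
  rw [hdiff, hvol b] at hsplit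
  set c : ℝ := (2 : ℝ)⁻¹ ^ (p + 1) with hc
  have hcpos : (0 : ℝ) ≤ c := by positivity
  have h1 : (1 : ENNReal) ≤ volume (S b ∩ Set.Ici T) + ENNReal.ofReal c :=
    hsplit.symm.trans_le (add_le_add_right hkey _)
  have h2 : ENNReal.ofReal (1 - 1 / 2 ^ (p + 1)) + ENNReal.ofReal c = 1 := by
    have hq : (1 : ℝ) / 2 ^ (p + 1) ≤ 1 := by
      rw [div_le_one (by positivity)]
      exact one_le_pow₀ (by norm_num)
    rw [← ENNReal.ofReal_add (by linarith) hcpos,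
      show (1 - 1 / 2 ^ (p + 1) : ℝ) + c = 1 by rw [hc]; field_simp; rw [← mul_pow]; norm_num,
      ENNReal.ofReal_one]
  have h3 : ENNReal.ofReal (1 - 1 / 2 ^ (p + 1)) + ENNReal.ofReal c
      ≤ volume (S b ∩ Set.Ici T) + ENNReal.ofReal c := h2.trans_le h1
  exact (ENNReal.add_le_add_iff_right ENNReal.ofReal_ne_top).mp h3
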